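/- arXiv:1710.01599 — 2 statements merged into one kernel-verified Lean document; each statement's English description precedes it below -/
import Mathlib

section
/- Let A be a unital C*-algebra, B a unital C*-algebra, and Λ : A → B a unital linear map. Then Λ is a Schwarz map (i.e., Λ(a*) = Λ(a)* and Λ(a* a) ≥ Λ(a)* Λ(a) for all a ∈ A) if and only if for every a ∈ A the 2×2 matrix with entries [[Λ(a* a), Λ(a*)], [Λ(a), 1]] is positive in M₂(B). -/
set_option maxHeartbeats 1000000 in
/-- A unital linear map `Λ` between unital C*-algebras is a Schwarz map
iff for every `a` the 2×2 matrix `[[Λ(a* a), Λ(a*)], [Λ(a), 1]]` is positive in `M₂(B)`,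
where positivity of a matrix `P` over a C*-algebra means `P = Cᴴ * C` for some `C`. -/
theorem schwarz_iff_two_by_two_matrix_positive
    {A B : Type*} [CStarAlgebra A] [CStarAlgebra B]
    [PartialOrder B] [StarOrderedRing B]
    (Λ : A →ₗ[ℂ] B) (hunital : Λ 1 = 1) :
    ((∀ a : A, Λ (star a) = star (Λ a)) ∧
        ∀ a : A, star (Λ a) * Λ a ≤ Λ (star a * a)) ↔
      ∀ a : A, ∃ C : Matrix (Fin 2) (Fin 2) B,
        !![Λ (star a * a), Λ (star a); Λ a, 1] = C.conjTranspose * C := by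
  constructor
  · rintro ⟨hstar, hineq⟩ a
    set b := Λ a with hb
    set x := Λ (star a * a) with hx
    have hnn : (0 : B) ≤ x - star b * b := by
      rw [sub_nonneg]; exact hineq a
    set d := CFC.sqrt (x - star b * b) with hd
    have hdnn : (0 : B) ≤ d := CFC.sqrt_nonneg _
    have hdsa : star d = d := hdnn.isSelfAdjoint.star_eq
    have hdd : d * d = x - star b * b := CFC.sqrt_mul_sqrt_self _ hnn
    refine ⟨!![d, 0; b, 1], ?_⟩
    ext i j
    fin_cases i <;> fin_cases j <;>
      simp [Matrix.mul_apply, Fin.sum_univ_two, hdsa, hdd, hstar a, hb] <;>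
      abel
  · intro h
    have key : ∀ a : A, Λ (star a) = star (Λ a) ∧ star (Λ a) * Λ a ≤ Λ (star a * a) := by
      intro a
      obtain ⟨C, hC⟩ := h a
      set p := C 0 0; set q := C 0 1; set r := C 1 0; set s := C 1 1
      have e00 : Λ (star a * a) = star p * p + star r * r := by
        have := congrFun (congrFun hC 0) 0
        simpa [Matrix.mul_apply, Fin.sum_univ_two] using this
      have e01 : Λ (star a) = star p * q + star r * s := by
        have := congrFun (congrFun hC 0) 1
        simpa [Matrix.mul_apply, Fin.sum_univ_two] using this
      have e10 : Λ a = star q * p + star s * r := by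
        have := congrFun (congrFun hC 1) 0
        simpa [Matrix.mul_apply, Fin.sum_univ_two] using this
      have e11 : (1 : B) = star q * q + star s * s := by
        have := congrFun (congrFun hC 1) 1
        simpa [Matrix.mul_apply, Fin.sum_univ_two] using this
      have hstar : Λ (star a) = star (Λ a) := by
        rw [e01, e10]; simp [star_add, star_mul, mul_comm]
      refine ⟨hstar, ?_⟩
      rw [← sub_nonneg]
      set b := Λ a with hb
      have h2 : star b = star p * q + star r * s := by rw [← hstar]; exact e01
      have expand : star (p - q * b) * (p - q * b) + star (r - s * b) * (r - s * b)
          = (star p * p + star r * r) - (star p * q + star r * s) * b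
            - star b * (star q * p + star s * r) + star b * ((star q * q + star s * s) * b) := by
        simp only [star_sub, star_mul]
        noncomm_ring
      have hcomp : Λ (star a * a) - star b * b
          = star (p - q * b) * (p - q * b) + star (r - s * b) * (r - s * b) := by
        rw [expand, ← e00, ← h2, ← e10, ← e11]
        noncomm_ring
      rw [hcomp]
      exact add_nonneg (star_mul_self_nonneg _) (star_mul_self_nonneg _)
    exact ⟨fun a => (key a).1, fun a => (key a).2⟩
end

section
/- Let A₁, A₂, B₂, C be unital C*-algebras, Φ : A₁ → A₂ a unital completely positive map, and Λ : A₂ ⊗_alg B₂ → C a Schwarz channel on the algebraic tensor product (viewed as a unital *-algebra). Then the composition Λ ∘ (Φ ⊗ id_{B₂}) : A₁ ⊗_alg B₂ → C is again a Schwarz channel. -/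
open scoped ComplexStarModule

section aux
variable {A : Type*} [CStarAlgebra A] [PartialOrder A] [StarOrderedRing A]

/-- inverse-sqrt decomposition of `x + δ•1` for `0 ≤ x`, `0 < δ`. -/
lemma aux_sqrt_decomp (x : A) (hx : 0 ≤ x) (δ : ℝ) (hδ : 0 < δ) :
    ∃ r s : A, star r = r ∧ star s = s ∧ r * s = 1 ∧ s * r = 1 ∧ r * r = x + δ • 1 := by
  have hsa : IsSelfAdjoint x := hx.isSelfAdjoint
  set f : ℝ → ℝ := fun t => Real.sqrt (|t| + δ) with hf
  set g : ℝ → ℝ := fun t => (Real.sqrt (|t| + δ))⁻¹ with hg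
  have hpos : ∀ t : ℝ, 0 < Real.sqrt (|t| + δ) := fun t =>
    Real.sqrt_pos.2 (by positivity)
  have hfc : Continuous f := by
    exact Real.continuous_sqrt.comp ((continuous_abs).add continuous_const)
  have hgc : Continuous g := hfc.inv₀ fun t => (hpos t).ne'
  refine ⟨cfc f x, cfc g x, ?_, ?_, ?_, ?_, ?_⟩
  · exact (cfc_predicate f x).star_eq
  · exact (cfc_predicate g x).star_eq
  · rw [← cfc_mul f g x]
    calc cfc (fun t => f t * g t) x = cfc (1 : ℝ → ℝ) x := by
          apply cfc_congr; intro t _; simp [hf, hg, mul_inv_cancel₀ (hpos t).ne']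
      _ = 1 := cfc_one ℝ x
  · rw [← cfc_mul g f x]
    calc cfc (fun t => g t * f t) x = cfc (1 : ℝ → ℝ) x := by
          apply cfc_congr; intro t _; simp [hf, hg, inv_mul_cancel₀ (hpos t).ne']
      _ = 1 := cfc_one ℝ x
  · rw [← cfc_mul f f x]
    have h1 : cfc (fun t => f t * f t) x = cfc (fun t : ℝ => t + δ) x := by
      apply cfc_congr; intro t ht
      have ht0 : 0 ≤ t := spectrum_nonneg_of_nonneg hx ht
      simp only [hf, abs_of_nonneg ht0]
      exact Real.mul_self_sqrt (by positivity)
    rw [h1, cfc_add x (fun t => t) (fun _ => δ) (by fun_prop) (by fun_prop), cfc_id' ℝ x,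
      cfc_const δ x, Algebra.algebraMap_eq_smul_one]
lemma aux_cholesky (n : ℕ) :
    ∀ (M : Fin n → Fin n → A) (δ : ℝ), 0 < δ →
    (∀ i j, star (M i j) = M j i) →
    (∀ c : Fin n → A, δ • ∑ i, star (c i) * c i ≤ ∑ i, ∑ j, star (c i) * M i j * c j) →
    ∃ R : Fin n → Fin n → A, ∀ i j, M i j = ∑ k, star (R k i) * R k j := by
  induction n with
  | zero => exact fun M δ _ _ _ => ⟨fun i => i.elim0, fun i => i.elim0⟩
  | succ n IH =>
    intro M δ hδ hherm hform
    set α : A := M 0 0 with hα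
    have hδα : δ • (1 : A) ≤ α := by
      have h := hform (fun i => if i = 0 then 1 else 0)
      simpa [apply_ite, Finset.sum_ite_eq'] using h
    have hx : (0 : A) ≤ α - δ • 1 := sub_nonneg.2 hδα
    obtain ⟨r, s, hrstar, hsstar, hrs, hsr, hrr⟩ := aux_sqrt_decomp (α - δ • 1) hx δ hδ
    rw [sub_add_cancel] at hrr
    set ι : A := s * s with hι
    have hι1 : α * ι = 1 := by
      rw [← hrr, hι, mul_assoc, ← mul_assoc r s s, hrs, one_mul, hrs]
    have hι2 : ι * α = 1 := by
      rw [← hrr, hι, mul_assoc, ← mul_assoc s r r, hsr, one_mul, hsr]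
    have hιstar : star ι = ι := by rw [hι, star_mul, hsstar]
    set β : Fin n → A := fun j => M 0 j.succ with hβ
    have hM0 : ∀ i, M i.succ 0 = star (β i) := fun i => by rw [hβ, hherm 0 i.succ]
    set S : Fin n → Fin n → A := fun i j => M i.succ j.succ - star (β i) * ι * β j with hS
    have hSherm : ∀ i j, star (S i j) = S j i := by
      intro i j
      simp only [hS, star_sub, star_mul, star_star, hιstar, hherm, hι, hβ, hsstar]
      noncomm_ring
    have hSform : ∀ c' : Fin n → A,
        δ • ∑ i, star (c' i) * c' i ≤ ∑ i, ∑ j, star (c' i) * S i j * c' j := by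
      intro c'
      set w : A := ∑ j, β j * c' j with hw
      set c : Fin (n + 1) → A := Fin.cons (-(ι * w)) c' with hc
      have hc0 : c 0 = -(ι * w) := rfl
      have hcs : ∀ i, c i.succ = c' i := fun i => rfl
      have hsc0 : star (c 0) = -(star w * ι) := by
        rw [hc0, star_neg, star_mul, hιstar]
      -- total form over M equals form over S
      have key : ∑ i, ∑ j, star (c i) * M i j * c j
          = ∑ i, ∑ j, star (c' i) * S i j * c' j := by
        rw [Fin.sum_univ_succ (f := fun i => ∑ j, star (c i) * M i j * c j)]
        rw [Fin.sum_univ_succ (f := fun j => star (c 0) * M 0 j * c j)]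
        have e2 : ∑ j : Fin n, star (c 0) * M 0 j.succ * c j.succ
            = -(star w * (ι * w)) := by
          rw [hsc0]
          calc ∑ j : Fin n, -(star w * ι) * M 0 j.succ * c' j
              = -(star w * ι * ∑ j, β j * c' j) := by
                rw [Finset.mul_sum, ← Finset.sum_neg_distrib]
                exact Finset.sum_congr rfl fun j _ => by rw [hβ, neg_mul, neg_mul, mul_assoc]
            _ = -(star w * (ι * w)) := by rw [← hw, mul_assoc]
        have e1 : star (c 0) * M 0 0 * c 0 = star w * (ι * w) := by
          rw [hsc0, hc0, ← hα]
          have h : -(star w * ι) * α * -(ι * w) = star w * ((ι * α) * (ι * w)) := by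
            noncomm_ring
          rw [h, hι2, one_mul]
        have e3 : ∀ i : Fin n, star (c i.succ) * M i.succ 0 * c 0
            = -(star (c' i) * star (β i) * (ι * w)) := by
          intro i
          rw [hcs, hM0, hc0, mul_neg]
        have e4 : ∑ i : Fin n, star (c' i) * star (β i) * (ι * w)
            = star w * (ι * w) := by
          rw [← Finset.sum_mul]
          congr 1
          rw [hw, star_sum]
          exact Finset.sum_congr rfl fun i _ => (star_mul (β i) (c' i)).symm
        rw [e1, e2]
        have e5 : ∑ i : Fin n, ∑ j, star (c i.succ) * M i.succ j * c j
            = ∑ i : Fin n, (-(star (c' i) * star (β i) * (ι * w))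
                + ∑ j : Fin n, star (c' i) * M i.succ j.succ * c' j) := by
          refine Finset.sum_congr rfl fun i _ => ?_
          rw [Fin.sum_univ_succ (f := fun j => star (c i.succ) * M i.succ j * c j), e3 i]
          simp only [hcs]
        rw [e5, Finset.sum_add_distrib, Finset.sum_neg_distrib, e4]
        have e6 : ∑ i, ∑ j, star (c' i) * S i j * c' j
            = (∑ i, ∑ j, star (c' i) * M i.succ j.succ * c' j)
              - star w * (ι * w) := by
          have : ∀ i j, star (c' i) * S i j * c' j
              = star (c' i) * M i.succ j.succ * c' j
                - star (c' i) * star (β i) * ι * (β j * c' j) := by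
            intro i j
            simp only [hS]
            noncomm_ring
          simp only [this, Finset.sum_sub_distrib]
          congr 1
          have : ∀ i : Fin n, ∑ j, star (c' i) * star (β i) * ι * (β j * c' j)
              = star (c' i) * star (β i) * (ι * w) := by
            intro i
            rw [← Finset.mul_sum, ← hw, mul_assoc]
          rw [Finset.sum_congr rfl fun i _ => this i, ← e4, Finset.sum_congr rfl
            fun i _ => rfl]
        rw [e6]
        abel
      calc δ • ∑ i, star (c' i) * c' i
          ≤ δ • ∑ i, star (c i) * c i := by
            refine smul_le_smul_of_nonneg_left ?_ hδ.le
            rw [Fin.sum_univ_succ (f := fun i => star (c i) * c i)]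
            simp only [hcs]
            exact le_add_of_nonneg_left (star_mul_self_nonneg _)
        _ ≤ ∑ i, ∑ j, star (c i) * M i j * c j := hform c
        _ = ∑ i, ∑ j, star (c' i) * S i j * c' j := key
    obtain ⟨R', hR'⟩ := IH S δ hδ hSherm hSform
    set R : Fin (n + 1) → Fin (n + 1) → A :=
      Fin.cons (Fin.cons r fun j => s * β j) (fun k' => Fin.cons 0 (R' k')) with hR
    have hR00 : R 0 0 = r := rfl
    have hR0s : ∀ j : Fin n, R 0 j.succ = s * β j := fun j => by
      simp only [hR, Fin.cons_zero, Fin.cons_succ]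
    have hRs0 : ∀ k : Fin n, R k.succ 0 = 0 := fun k => by
      simp only [hR, Fin.cons_succ, Fin.cons_zero]
    have hRss : ∀ k j : Fin n, R k.succ j.succ = R' k j := fun k j => by
      simp only [hR, Fin.cons_succ]
    refine ⟨R, fun i j => ?_⟩
    rw [Fin.sum_univ_succ (f := fun k => star (R k i) * R k j)]
    refine Fin.cases ?_ (fun i' => ?_) i <;> refine Fin.cases ?_ (fun j' => ?_) j
    · simp only [hR00, hRs0, star_zero, zero_mul, mul_zero, Finset.sum_const_zero, add_zero,
        hrstar, hrr, hα]
    · simp only [hR00, hR0s, hRs0, star_zero, zero_mul, Finset.sum_const_zero, add_zero, hrstar]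
      rw [← mul_assoc, hrs, one_mul, hβ]
    · simp only [hR00, hR0s, hRs0, mul_zero, Finset.sum_const_zero, add_zero, star_mul, hsstar]
      rw [mul_assoc, hsr, mul_one, hM0]
    · simp only [hR0s, hRss]
      rw [← hR' i' j', star_mul, hsstar]
      rw [hS]
      have : star (β i') * s * (s * β j') = star (β i') * ι * β j' := by
        rw [hι, mul_assoc, mul_assoc, mul_assoc]
      rw [this]
      noncomm_ring
end aux


section phi

lemma aux_sq_decomp {A : Type*} [CStarAlgebra A] (u : A) (hu : IsSelfAdjoint u) :
    ∃ c d : A, star c = c ∧ star d = d ∧ u = c * c - d * d := by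
  set f : ℝ → ℝ := fun t => Real.sqrt (max t 0) with hf
  set g : ℝ → ℝ := fun t => Real.sqrt (max (-t) 0) with hg
  have hfc : Continuous f := Real.continuous_sqrt.comp (continuous_id.max continuous_const)
  have hgc : Continuous g := Real.continuous_sqrt.comp (continuous_neg.max continuous_const)
  refine ⟨cfc f u, cfc g u, (cfc_predicate f u).star_eq, (cfc_predicate g u).star_eq, ?_⟩
  rw [← cfc_mul f f u, ← cfc_mul g g u, ← cfc_sub (fun t => f t * f t) (fun t => g t * g t) u]
  have : ∀ t : ℝ, f t * f t - g t * g t = t := by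
    intro t
    rw [hf, hg]
    simp only [Real.mul_self_sqrt (le_max_right _ _)]
    rcases le_total t 0 with h | h
    · rw [max_eq_right h, max_eq_left (by linarith), zero_sub, neg_neg]
    · rw [max_eq_left h, max_eq_right (by linarith), sub_zero]
  exact ((cfc_congr (fun t _ => this t)).trans (cfc_id' ℝ u)).symm

variable {A₁ A₂ : Type*} [CStarAlgebra A₁] [CStarAlgebra A₂]
  [PartialOrder A₂] [StarOrderedRing A₂]
  (Φ : A₁ →ₗ[ℂ] A₂)
  (hΦcp : ∀ (n : ℕ) (a : Fin n → A₁) (b : Fin n → A₂),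
      0 ≤ ∑ i, ∑ j, star (b i) * Φ (star (a i) * a j) * b j)

include hΦcp

lemma aux_phi_pos : ∀ p : A₁, 0 ≤ Φ (star p * p) := by
  intro p
  have h := hΦcp 1 (fun _ => p) (fun _ => 1)
  simpa [Fin.sum_univ_one] using h

lemma aux_phi_star : ∀ a : A₁, Φ (star a) = star (Φ a) := by
  have hsa : ∀ u : A₁, IsSelfAdjoint u → IsSelfAdjoint (Φ u) := by
    intro u hu
    obtain ⟨c, d, hc, hd, hcd⟩ := aux_sq_decomp u hu
    rw [hcd, map_sub]
    have h1 : (0 : A₂) ≤ Φ (c * c) := by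
      have := aux_phi_pos Φ hΦcp c; rwa [hc] at this
    have h2 : (0 : A₂) ≤ Φ (d * d) := by
      have := aux_phi_pos Φ hΦcp d; rwa [hd] at this
    exact h1.isSelfAdjoint.sub h2.isSelfAdjoint
  intro a
  obtain ⟨u, hu, v, hv, ha⟩ : ∃ u, IsSelfAdjoint u ∧ ∃ v, IsSelfAdjoint v ∧
      a = u + Complex.I • v :=
    ⟨(ℜ a : A₁), (ℜ a).2, (ℑ a : A₁), (ℑ a).2, (realPart_add_I_smul_imaginaryPart a).symm⟩
  rw [ha, star_add, star_smul, Complex.star_def, Complex.conj_I, hu.star_eq, hv.star_eq,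
    map_add, map_smul, map_add, map_smul, star_add, star_smul, Complex.star_def,
    Complex.conj_I, (hsa u hu).star_eq, (hsa v hv).star_eq]

lemma aux_matrix_schwarz (hΦ1 : Φ 1 = 1) :
    ∀ (n : ℕ) (a : Fin n → A₁) (b : Fin n → A₂),
      0 ≤ ∑ i, ∑ j, star (b i) * (Φ (star (a i) * a j) - star (Φ (a i)) * Φ (a j)) * b j := by
  intro n a b
  have hstar := aux_phi_star Φ hΦcp
  set cc : A₂ := ∑ j, Φ (a j) * b j with hcc
  have h := hΦcp (n + 1) (Fin.cons 1 a) (Fin.cons (-cc) b)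
  simp only [Fin.sum_univ_succ, Fin.cons_zero, Fin.cons_succ, star_one, one_mul, mul_one,
    hΦ1, star_neg, neg_mul, mul_neg, neg_neg, hstar] at h
  -- h should now be an inequality with four groups of terms
  have e2 : ∑ j : Fin n, star cc * Φ (a j) * b j = star cc * cc := by
    rw [hcc, Finset.mul_sum]
    exact Finset.sum_congr rfl fun j _ => by rw [mul_assoc]
  have e3 : ∑ i : Fin n, star (b i) * star (Φ (a i)) * cc = star cc * cc := by
    rw [← Finset.sum_mul]
    congr 1
    rw [hcc, star_sum]
    exact Finset.sum_congr rfl fun i _ => (star_mul (Φ (a i)) (b i)).symm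
  have goal_eq : ∑ i, ∑ j, star (b i) * (Φ (star (a i) * a j) - star (Φ (a i)) * Φ (a j)) * b j
      = (∑ i, ∑ j, star (b i) * Φ (star (a i) * a j) * b j) - star cc * cc := by
    have hterm : ∀ (i j : Fin n),
        star (b i) * (Φ (star (a i) * a j) - star (Φ (a i)) * Φ (a j)) * b j
        = star (b i) * Φ (star (a i) * a j) * b j
          - (star (b i) * star (Φ (a i))) * (Φ (a j) * b j) := by
      intro i j; noncomm_ring
    simp only [hterm, Finset.sum_sub_distrib]
    congr 1
    rw [← e3]
    refine Finset.sum_congr rfl fun i _ => ?_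
    rw [hcc, Finset.mul_sum]
  rw [goal_eq]
  rw [Finset.sum_add_distrib, Finset.sum_neg_distrib, Finset.sum_neg_distrib, e2, e3] at h
  exact h.trans_eq (by abel)
end phi

lemma aux_repr {A B D : Type*} [CStarAlgebra A] [CStarAlgebra B]
    [Ring D] [Algebra ℂ D]
    (t : A →ₗ[ℂ] B →ₗ[ℂ] D) (hspan : Submodule.span ℂ {x : D | ∃ a b, x = t a b} = ⊤)
    (x : D) : ∃ (n : ℕ) (a : Fin n → A) (b : Fin n → B), x = ∑ i, t (a i) (b i) := by
  have hx : x ∈ Submodule.span ℂ {x : D | ∃ a b, x = t a b} := by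
    rw [hspan]; exact Submodule.mem_top
  induction hx using Submodule.span_induction with
  | mem y hy =>
      obtain ⟨a, b, rfl⟩ := hy
      exact ⟨1, fun _ => a, fun _ => b, by simp⟩
  | zero => exact ⟨0, Fin.elim0, Fin.elim0, by simp⟩
  | add y z _ _ hy hz =>
      obtain ⟨m, a, b, rfl⟩ := hy
      obtain ⟨k, a', b', rfl⟩ := hz
      refine ⟨m + k, Fin.append a a', Fin.append b b', ?_⟩
      rw [Fin.sum_univ_add]
      simp [Fin.append_left, Fin.append_right]
  | smul z y _ hy =>
      obtain ⟨m, a, b, rfl⟩ := hy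
      refine ⟨m, fun i => z • a i, b, ?_⟩
      rw [Finset.smul_sum]
      exact Finset.sum_congr rfl fun i _ => by rw [map_smul, LinearMap.smul_apply]

/-- Let `D₁ = A₁ ⊗_alg B₂` and `D₂ = A₂ ⊗_alg B₂` be the algebraic
tensor products, presented as unital *-algebras `D₁`, `D₂` together with bilinear maps
`t₁`, `t₂` (the tensor maps `(a, b) ↦ a ⊗ b`) satisfying the defining relations of the
algebraic tensor product of unital C*-algebras: simple tensors span, `1 ⊗ 1 = 1`,
`(a ⊗ b)(c ⊗ d) = ac ⊗ bd` and `(a ⊗ b)* = a* ⊗ b*`.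
If `Φ : A₁ → A₂` is a unital completely positive map, `T = Φ ⊗ id` is the induced linear
map, and `Λ : D₂ → C` is a Schwarz channel into a unital C*-algebra `C`, then
`Λ ∘ (Φ ⊗ id)` is again a Schwarz channel. -/
theorem comp_schwarz_with_ucp_tensor_id_is_schwarz
    {A₁ A₂ B₂ C D₁ D₂ : Type*}
    [CStarAlgebra A₁] [CStarAlgebra A₂] [PartialOrder A₂] [StarOrderedRing A₂] [CStarAlgebra B₂] [CStarAlgebra C]
    [PartialOrder C] [StarOrderedRing C]
    [Ring D₁] [StarRing D₁] [Algebra ℂ D₁] [StarModule ℂ D₁]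
    [Ring D₂] [StarRing D₂] [Algebra ℂ D₂] [StarModule ℂ D₂]
    (t₁ : A₁ →ₗ[ℂ] B₂ →ₗ[ℂ] D₁)
    (ht₁span : Submodule.span ℂ {x : D₁ | ∃ a b, x = t₁ a b} = ⊤)
    (ht₁one : t₁ 1 1 = 1)
    (ht₁mul : ∀ (a c : A₁) (b d : B₂), t₁ a b * t₁ c d = t₁ (a * c) (b * d))
    (ht₁star : ∀ (a : A₁) (b : B₂), star (t₁ a b) = t₁ (star a) (star b))
    (t₂ : A₂ →ₗ[ℂ] B₂ →ₗ[ℂ] D₂)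
    (ht₂span : Submodule.span ℂ {x : D₂ | ∃ a b, x = t₂ a b} = ⊤)
    (ht₂one : t₂ 1 1 = 1)
    (ht₂mul : ∀ (a c : A₂) (b d : B₂), t₂ a b * t₂ c d = t₂ (a * c) (b * d))
    (ht₂star : ∀ (a : A₂) (b : B₂), star (t₂ a b) = t₂ (star a) (star b))
    (Φ : A₁ →ₗ[ℂ] A₂) (hΦ1 : Φ 1 = 1)
    (hΦcp : ∀ (n : ℕ) (a : Fin n → A₁) (b : Fin n → A₂),
      0 ≤ ∑ i, ∑ j, star (b i) * Φ (star (a i) * a j) * b j)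
    (T : D₁ →ₗ[ℂ] D₂) (hT : ∀ (a : A₁) (b : B₂), T (t₁ a b) = t₂ (Φ a) b)
    (Λ : D₂ →ₗ[ℂ] C) (hΛ1 : Λ 1 = 1)
    (hΛstar : ∀ x : D₂, Λ (star x) = star (Λ x))
    (hΛsch : ∀ x : D₂, star (Λ x) * Λ x ≤ Λ (star x * x)) :
    (Λ ∘ₗ T) 1 = 1 ∧ (∀ x : D₁, (Λ ∘ₗ T) (star x) = star ((Λ ∘ₗ T) x)) ∧
      ∀ x : D₁, star ((Λ ∘ₗ T) x) * (Λ ∘ₗ T) x ≤ (Λ ∘ₗ T) (star x * x) := by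
  have hΦstar : ∀ a : A₁, Φ (star a) = star (Φ a) := aux_phi_star Φ hΦcp
  have hmx := aux_matrix_schwarz Φ hΦcp hΦ1
  refine ⟨?_, ?_, ?_⟩
  · rw [LinearMap.comp_apply, ← ht₁one, hT, hΦ1, ht₂one, hΛ1]
  · intro x
    obtain ⟨n, a, b, rfl⟩ := aux_repr t₁ ht₁span x
    calc (Λ ∘ₗ T) (star (∑ i, t₁ (a i) (b i)))
        = Λ (T (∑ i, t₁ (star (a i)) (star (b i)))) := by
          rw [LinearMap.comp_apply, star_sum]
          exact congrArg Λ (congrArg T (Finset.sum_congr rfl fun i _ => ht₁star _ _))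
      _ = ∑ i, Λ (t₂ (Φ (star (a i))) (star (b i))) := by
          rw [map_sum, map_sum]
          exact Finset.sum_congr rfl fun i _ => congrArg Λ (hT _ _)
      _ = ∑ i, star (Λ (t₂ (Φ (a i)) (b i))) := by
          refine Finset.sum_congr rfl fun i _ => ?_
          rw [hΦstar, ← ht₂star, hΛstar]
      _ = star ((Λ ∘ₗ T) (∑ i, t₁ (a i) (b i))) := by
          rw [← star_sum, LinearMap.comp_apply, map_sum, map_sum]
          exact congrArg star
            (Finset.sum_congr rfl fun i _ => by rw [hT]).symm
  · intro x
    obtain ⟨n, a, b, rfl⟩ := aux_repr t₁ ht₁span x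
    set x : D₁ := ∑ i, t₁ (a i) (b i) with hxdef
    set M : Fin n → Fin n → A₂ :=
      fun i j => Φ (star (a i) * a j) - star (Φ (a i)) * Φ (a j) with hM
    set w₀ : D₂ := ∑ i, t₂ 1 (star (b i) * b i) with hw₀
    have hTx : T x = ∑ i, t₂ (Φ (a i)) (b i) := by
      rw [hxdef, map_sum]
      exact Finset.sum_congr rfl fun i _ => hT _ _
    have hxx : star x * x = ∑ i, ∑ j, t₁ (star (a i) * a j) (star (b i) * b j) := by
      rw [hxdef, star_sum, Finset.sum_congr rfl fun i _ => ht₁star (a i) (b i),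
        Finset.sum_mul_sum]
      exact Finset.sum_congr rfl fun i _ => Finset.sum_congr rfl fun j _ => ht₁mul _ _ _ _
    have hTxx : T (star x * x) = ∑ i, ∑ j, t₂ (Φ (star (a i) * a j)) (star (b i) * b j) := by
      rw [hxx, map_sum]
      exact Finset.sum_congr rfl fun i _ => by
        rw [map_sum]
        exact Finset.sum_congr rfl fun j _ => hT _ _
    have hTsTx : star (T x) * T x
        = ∑ i, ∑ j, t₂ (star (Φ (a i)) * Φ (a j)) (star (b i) * b j) := by
      rw [hTx, star_sum, Finset.sum_congr rfl fun i _ => ht₂star (Φ (a i)) (b i),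
        Finset.sum_mul_sum]
      exact Finset.sum_congr rfl fun i _ => Finset.sum_congr rfl fun j _ => ht₂mul _ _ _ _
    have hu : T (star x * x) - star (T x) * T x
        = ∑ i, ∑ j, t₂ (M i j) (star (b i) * b j) := by
      rw [hTxx, hTsTx, ← Finset.sum_sub_distrib]
      refine Finset.sum_congr rfl fun i _ => ?_
      rw [← Finset.sum_sub_distrib]
      refine Finset.sum_congr rfl fun j _ => ?_
      rw [hM, map_sub, LinearMap.sub_apply]
    set u : D₂ := ∑ i, ∑ j, t₂ (M i j) (star (b i) * b j) with hudef
    have hMher : ∀ i j, star (M i j) = M j i := by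
      intro i j
      rw [hM]
      simp only [star_sub, star_mul, star_star, ← hΦstar, star_mul']
    -- key positivity with epsilon
    have hkey : ∀ ε : ℝ, 0 < ε → 0 ≤ Λ u + ε • Λ w₀ := by
      intro ε hε
      set M' : Fin n → Fin n → A₂ :=
        fun i j => M i j + (if i = j then ε • (1 : A₂) else 0) with hM'
      have hM'her : ∀ i j, star (M' i j) = M' j i := by
        intro i j
        simp only [hM']
        rw [star_add, hMher]
        congr 1
        by_cases h : i = j
        · subst h; simp [star_smul]
        · rw [if_neg h, if_neg (Ne.symm h), star_zero]
      have hM'form : ∀ c : Fin n → A₂,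
          ε • ∑ i, star (c i) * c i ≤ ∑ i, ∑ j, star (c i) * M' i j * c j := by
        intro c
        have hsplit : ∑ i, ∑ j, star (c i) * M' i j * c j
            = (∑ i, ∑ j, star (c i) * M i j * c j) + ε • ∑ i, star (c i) * c i := by
          rw [hM']
          simp only [mul_add, add_mul]
          rw [Finset.sum_congr rfl fun i (_ : i ∈ Finset.univ) => Finset.sum_add_distrib,
            Finset.sum_add_distrib]
          congr 1
          rw [Finset.smul_sum]
          refine Finset.sum_congr rfl fun i _ => ?_
          rw [Finset.sum_eq_single i]
          · rw [if_pos rfl, mul_smul_comm, mul_one, smul_mul_assoc]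
          · intro j _ hj
            rw [if_neg (Ne.symm hj), mul_zero, zero_mul]
          · intro h; exact absurd (Finset.mem_univ i) h
        rw [hsplit]
        exact le_add_of_nonneg_left (hmx n a c)
      obtain ⟨R, hR⟩ := aux_cholesky n M' ε hε hM'her hM'form
      set d : Fin n → D₂ := fun k => ∑ j, t₂ (R k j) (b j) with hd
      have hdd : ∑ k, star (d k) * d k = u + ε • w₀ := by
        have h1 : ∀ k, star (d k) * d k
            = ∑ i, ∑ j, t₂ (star (R k i) * R k j) (star (b i) * b j) := by
          intro k
          rw [hd]
          simp only
          rw [star_sum, Finset.sum_congr rfl fun i _ => ht₂star (R k i) (b i),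
            Finset.sum_mul_sum]
          exact Finset.sum_congr rfl fun i _ => Finset.sum_congr rfl
            fun j _ => ht₂mul _ _ _ _
        rw [Finset.sum_congr rfl fun k (_ : k ∈ Finset.univ) => h1 k]
        rw [Finset.sum_comm]
        have h2 : ∀ i, ∑ k, ∑ j, t₂ (star (R k i) * R k j) (star (b i) * b j)
            = ∑ j, t₂ (M' i j) (star (b i) * b j) := by
          intro i
          rw [Finset.sum_comm]
          refine Finset.sum_congr rfl fun j _ => ?_
          rw [hR i j, map_sum, LinearMap.sum_apply]
        rw [Finset.sum_congr rfl fun i (_ : i ∈ Finset.univ) => h2 i]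
        have h3 : ∀ i j, t₂ (M' i j) (star (b i) * b j)
            = t₂ (M i j) (star (b i) * b j)
              + t₂ (if i = j then ε • (1 : A₂) else 0) (star (b i) * b j) := by
          intro i j
          rw [hM', map_add, LinearMap.add_apply]
        simp only [h3]
        rw [Finset.sum_congr rfl fun i (_ : i ∈ Finset.univ) => Finset.sum_add_distrib,
          Finset.sum_add_distrib, ← hudef]
        congr 1
        rw [hw₀, Finset.smul_sum]
        refine Finset.sum_congr rfl fun i _ => ?_
        rw [Finset.sum_eq_single i]
        · rw [if_pos rfl, ← Complex.coe_smul, map_smul, LinearMap.smul_apply,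
            Complex.coe_smul]
        · intro j _ hj
          rw [if_neg (Ne.symm hj), map_zero, LinearMap.zero_apply]
        · intro h; exact absurd (Finset.mem_univ i) h
      calc (0 : C) ≤ ∑ k, Λ (star (d k) * d k) :=
            Finset.sum_nonneg fun k _ => le_trans (star_mul_self_nonneg _) (hΛsch _)
        _ = Λ (u + ε • w₀) := by rw [← map_sum, hdd]
        _ = Λ u + ε • Λ w₀ := by
            rw [map_add, ← Complex.coe_smul, map_smul, Complex.coe_smul]
    have hu0 : (0 : C) ≤ Λ u := by
      have hseq : Filter.Tendsto (fun k : ℕ => Λ u + (1 / (k + 1) : ℝ) • Λ w₀)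
          Filter.atTop (nhds (Λ u)) := by
        have h1 : Filter.Tendsto (fun k : ℕ => (1 / (k + 1) : ℝ)) Filter.atTop (nhds 0) :=
          tendsto_one_div_add_atTop_nhds_zero_nat
        simpa using tendsto_const_nhds.add (h1.smul_const (Λ w₀))
      exact ge_of_tendsto hseq (Filter.Eventually.of_forall fun k => hkey _ (by positivity))
    have hfin : Λ (star (T x) * T x) ≤ Λ (T (star x * x)) := by
      rw [← sub_nonneg, ← map_sub]
      rw [← hu] at hu0
      exact hu0
    calc star ((Λ ∘ₗ T) x) * (Λ ∘ₗ T) x = star (Λ (T x)) * Λ (T x) := rfl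
      _ ≤ Λ (star (T x) * T x) := hΛsch (T x)
      _ ≤ Λ (T (star x * x)) := hfin
      _ = (Λ ∘ₗ T) (star x * x) := rfl
end
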